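/- Let A ∈ ℝ^(n^m) with m ≥ 2 and let (x, λ) be a tropical H-eigenpair of A. Then there exists y in the H-cycle polytope H_{n,m} (y ≥ 0, coordinates summing to 1, satisfying the balance condition) with λ = Σ a_{i1...im}·y_{i1...im}. Hence λ equals the minimum of the linear functional y ↦ Σ a_{i1...im} y_{i1...im} over H_{n,m}. -/

import Mathlib

open Finset Filter Topology

/-- Cesàro fixed point: a linear map preserving the standard simplex has a
fixed point in it. -/
lemma exists_stationary {n : ℕ} (hn : 0 < n)
    (S : (Fin n → ℝ) →ₗ[ℝ] (Fin n → ℝ))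
    (hS : ∀ w ∈ stdSimplex ℝ (Fin n), S w ∈ stdSimplex ℝ (Fin n)) :
    ∃ w ∈ stdSimplex ℝ (Fin n), S w = w := by
  have hScont : Continuous S := S.continuous_of_finiteDimensional
  have hnR : (0:ℝ) < n := by exact_mod_cast hn
  set u : Fin n → ℝ := fun _ => (n:ℝ)⁻¹ with hu
  have hu1 : u ∈ stdSimplex ℝ (Fin n) := by
    constructor
    · intro l; positivity
    · simp [hu, Finset.sum_const, Finset.card_univ]
      field_simp
  set g : ℕ → (Fin n → ℝ) := fun t => S^[t] u with hg
  have hgmem : ∀ t, g t ∈ stdSimplex ℝ (Fin n) := by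
    intro t
    induction t with
    | zero => simpa [hg] using hu1
    | succ t ih =>
      have : g (t+1) = S (g t) := by
        simp [hg, Function.iterate_succ_apply']
      rw [this]; exact hS _ ih
  set v : ℕ → (Fin n → ℝ) := fun N => ((N:ℝ)+1)⁻¹ • ∑ t ∈ Finset.range (N+1), g t with hv
  have hvmem : ∀ N, v N ∈ stdSimplex ℝ (Fin n) := by
    intro N
    have hNpos : (0:ℝ) < (N:ℝ)+1 := by positivity
    constructor
    · intro l
      simp only [hv, Pi.smul_apply, smul_eq_mul, Finset.sum_apply]
      have : 0 ≤ ∑ t ∈ Finset.range (N+1), g t l :=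
        Finset.sum_nonneg fun t _ => (hgmem t).1 l
      positivity
    · simp only [hv, Pi.smul_apply, smul_eq_mul, Finset.sum_apply]
      rw [← Finset.mul_sum, Finset.sum_comm]
      have : ∀ t ∈ Finset.range (N+1), ∑ l : Fin n, g t l = 1 := fun t _ => (hgmem t).2
      rw [Finset.sum_congr rfl this]
      simp
      field_simp
  obtain ⟨w, hwmem, φ, hφ, hconv⟩ :=
    (isCompact_stdSimplex ℝ (Fin n)).tendsto_subseq hvmem
  -- norm bound on simplex
  have hnorm : ∀ p ∈ stdSimplex ℝ (Fin n), ‖p‖ ≤ 1 := by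
    intro p hp
    rw [pi_norm_le_iff_of_nonneg zero_le_one]
    intro l
    rw [Real.norm_eq_abs, abs_le]
    constructor
    · linarith [hp.1 l]
    · calc p l ≤ ∑ l' : Fin n, p l' :=
            Finset.single_le_sum (fun l' _ => hp.1 l') (Finset.mem_univ l)
        _ = 1 := hp.2
  have hkey : Tendsto (fun N => S (v N) - v N) atTop (𝓝 0) := by
    have heq : ∀ N, S (v N) - v N = ((N:ℝ)+1)⁻¹ • (g (N+1) - g 0) := by
      intro N
      have : S (v N) = ((N:ℝ)+1)⁻¹ • ∑ t ∈ Finset.range (N+1), g (t+1) := by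
        rw [hv]
        simp only [map_smul, map_sum]
        congr 1
        refine Finset.sum_congr rfl fun t _ => ?_
        simp [hg, Function.iterate_succ_apply']
      rw [this, hv, ← smul_sub, ← Finset.sum_sub_distrib, Finset.sum_range_sub]
    refine squeeze_zero_norm (f := fun N => S (v N) - v N) (a := fun N => ((N:ℝ)+1)⁻¹ * 2) ?_ ?_
    · intro N
      show ‖S (v N) - v N‖ ≤ ((N:ℝ)+1)⁻¹ * 2
      rw [heq N, norm_smul]
      have h1 : ‖g (N+1) - g 0‖ ≤ 2 := by
        calc ‖g (N+1) - g 0‖ ≤ ‖g (N+1)‖ + ‖g 0‖ := norm_sub_le _ _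
          _ ≤ 1 + 1 := add_le_add (hnorm _ (hgmem _)) (hnorm _ (hgmem _))
          _ = 2 := by norm_num
      have h2 : ‖(((N:ℝ)+1)⁻¹ : ℝ)‖ = ((N:ℝ)+1)⁻¹ := by
        rw [Real.norm_eq_abs, abs_of_pos]; positivity
      rw [h2]
      have : (0:ℝ) ≤ ((N:ℝ)+1)⁻¹ := by positivity
      nlinarith [norm_nonneg (g (N+1) - g 0)]
    · have := tendsto_one_div_add_atTop_nhds_zero_nat (𝕜 := ℝ)
      have h2 : Tendsto (fun N : ℕ => (1 / ((N:ℝ)+1)) * 2) atTop (𝓝 (0 * 2)) :=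
        this.mul_const 2
      simpa [one_div] using h2
  have h1 : Tendsto (fun N => S (v (φ N)) - v (φ N)) atTop (𝓝 0) :=
    hkey.comp hφ.tendsto_atTop
  have h2 : Tendsto (fun N => S (v (φ N)) - v (φ N)) atTop (𝓝 (S w - w)) := by
    exact ((hScont.continuousAt.tendsto.comp hconv).sub hconv)
  have h3 : S w - w = 0 := tendsto_nhds_unique h2 h1
  exact ⟨w, hwmem, by rwa [sub_eq_zero] at h3⟩

/-- The transition linear map associated with a choice `f` of minimizing tuples. -/
noncomputable def Smap (n k : ℕ) (f : Fin n → Fin k → Fin n) :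
    (Fin n → ℝ) →ₗ[ℝ] (Fin n → ℝ) where
  toFun w l := (k:ℝ)⁻¹ * ∑ i : Fin n, ∑ j : Fin k, (if l = f i j then (1:ℝ) else 0) * w i
  map_add' a b := by
    funext l
    simp only [Pi.add_apply, mul_add, Finset.sum_add_distrib]
  map_smul' c a := by
    funext l
    simp only [Pi.smul_apply, smul_eq_mul, RingHom.id_apply, Finset.mul_sum]
    refine Finset.sum_congr rfl fun i _ => Finset.sum_congr rfl fun j _ => by ring

example : True := trivial

/-- Pairing the balance vector of `(i,t)` with `x`. -/
lemma dot_single_comb {n k : ℕ} (x : Fin n → ℝ) (i : Fin n) (t : Fin k → Fin n) :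
    ∑ l : Fin n, x l * (((k : ℝ) • (Pi.single i (1:ℝ) : Fin n → ℝ) -
        ∑ j, (Pi.single (t j) (1:ℝ) : Fin n → ℝ)) l) =
      (k : ℝ) * x i - ∑ j, x (t j) := by
  simp only [Pi.sub_apply, Pi.smul_apply, Finset.sum_apply, Pi.single_apply, smul_eq_mul,
    mul_sub, Finset.sum_sub_distrib, Finset.mul_sum]
  congr 1
  · rw [Finset.sum_congr rfl (fun l _ => show x l * ((k:ℝ) * if l = i then 1 else 0)
        = if l = i then (k:ℝ) * x l else 0 by split_ifs <;> ring)]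
    rw [Finset.sum_ite_eq' Finset.univ i (fun l => (k:ℝ) * x l)]
    simp
  · rw [Finset.sum_comm]
    refine Finset.sum_congr rfl fun j _ => ?_
    rw [Finset.sum_congr rfl (fun l _ => show x l * (if l = t j then (1:ℝ) else 0)
        = if l = t j then x l else 0 by split_ifs <;> ring)]
    rw [Finset.sum_ite_eq' Finset.univ (t j) (fun l => x l)]
    simp

/-- Pairing a balance certificate with `x` gives zero. -/
lemma balance_dot {n k : ℕ} (x : Fin n → ℝ) (z : Fin n → (Fin k → Fin n) → ℝ)
    (hbal : (∑ i : Fin n, ∑ t : Fin k → Fin n, z i t •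
        ((k : ℝ) • (Pi.single i (1 : ℝ) : Fin n → ℝ) -
          ∑ j, (Pi.single (t j) (1 : ℝ) : Fin n → ℝ))) = (0 : Fin n → ℝ)) :
    ∑ i : Fin n, ∑ t : Fin k → Fin n, z i t * ((k:ℝ) * x i - ∑ j, x (t j)) = 0 := by
  have h0 : ∑ l : Fin n, x l * ((∑ i : Fin n, ∑ t : Fin k → Fin n, z i t •
      ((k : ℝ) • (Pi.single i (1 : ℝ) : Fin n → ℝ) -
        ∑ j, (Pi.single (t j) (1 : ℝ) : Fin n → ℝ))) l) = 0 := by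
    rw [hbal]; simp
  rw [← h0]
  simp only [Finset.sum_apply, Pi.smul_apply, smul_eq_mul, Finset.mul_sum]
  conv_rhs => rw [Finset.sum_comm]
  refine Finset.sum_congr rfl fun i _ => ?_
  conv_rhs => rw [Finset.sum_comm]
  refine Finset.sum_congr rfl fun t _ => ?_
  rw [← dot_single_comb x i t, Finset.mul_sum]
  refine Finset.sum_congr rfl fun l _ => by ring

theorem stmt_16 (n k : ℕ) (hn : 0 < n) (hk : 1 ≤ k)
    (A : Fin n → (Fin k → Fin n) → ℝ) (x : Fin n → ℝ) (lam : ℝ)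
    (heig : ∀ i : Fin n,
      Finset.univ.inf' ⟨fun _ => ⟨0, hn⟩, Finset.mem_univ _⟩
        (fun t : Fin k → Fin n => A i t + ∑ j, x (t j)) = lam + (k : ℝ) * x i) :
    ∃ y : Fin n → (Fin k → Fin n) → ℝ,
      (∀ i t, 0 ≤ y i t) ∧
      (∑ i : Fin n, ∑ t : Fin k → Fin n, y i t) = 1 ∧
      (∑ i : Fin n, ∑ t : Fin k → Fin n, y i t •
          ((k : ℝ) • (Pi.single i (1 : ℝ) : Fin n → ℝ) -
            ∑ j, (Pi.single (t j) (1 : ℝ) : Fin n → ℝ))) = (0 : Fin n → ℝ) ∧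
      lam = ∑ i : Fin n, ∑ t : Fin k → Fin n, A i t * y i t ∧
      (∀ y' : Fin n → (Fin k → Fin n) → ℝ,
        (∀ i t, 0 ≤ y' i t) →
        (∑ i : Fin n, ∑ t : Fin k → Fin n, y' i t) = 1 →
        (∑ i : Fin n, ∑ t : Fin k → Fin n, y' i t •
            ((k : ℝ) • (Pi.single i (1 : ℝ) : Fin n → ℝ) -
              ∑ j, (Pi.single (t j) (1 : ℝ) : Fin n → ℝ))) = (0 : Fin n → ℝ) →
        lam ≤ ∑ i : Fin n, ∑ t : Fin k → Fin n, A i t * y' i t) := by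
  have hkR : (0:ℝ) < k := by exact_mod_cast hk
  have hk0 : (k:ℝ) ≠ 0 := ne_of_gt hkR
  -- choose minimizers
  have hmin : ∀ i : Fin n, ∃ t : Fin k → Fin n,
      A i t + ∑ j, x (t j) = lam + (k:ℝ) * x i := by
    intro i
    obtain ⟨t, -, ht⟩ := Finset.exists_mem_eq_inf'
      (⟨fun _ => ⟨0, hn⟩, Finset.mem_univ _⟩ : (Finset.univ : Finset (Fin k → Fin n)).Nonempty)
      (fun t : Fin k → Fin n => A i t + ∑ j, x (t j))
    exact ⟨t, by rw [← ht, heig i]⟩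
  choose f hf using hmin
  -- lower bound from the eigen-equation
  have hub : ∀ (i : Fin n) (t : Fin k → Fin n),
      lam + (k:ℝ) * x i ≤ A i t + ∑ j, x (t j) := by
    intro i t
    have h := Finset.inf'_le
      (f := fun t : Fin k → Fin n => A i t + ∑ j, x (t j)) (Finset.mem_univ t)
    rw [heig i] at h
    exact h
  -- the transition map preserves the simplex
  set S := Smap n k f with hSdef
  have hSapply : ∀ (w : Fin n → ℝ) (l : Fin n), S w l =
      (k:ℝ)⁻¹ * ∑ i : Fin n, ∑ j : Fin k, (if l = f i j then (1:ℝ) else 0) * w i :=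
    fun w l => rfl
  have hSsimplex : ∀ w ∈ stdSimplex ℝ (Fin n), S w ∈ stdSimplex ℝ (Fin n) := by
    intro w hw
    constructor
    · intro l
      rw [hSapply]
      have h1 : 0 ≤ ∑ i : Fin n, ∑ j : Fin k, (if l = f i j then (1:ℝ) else 0) * w i :=
        Finset.sum_nonneg fun i _ => Finset.sum_nonneg fun j _ =>
          mul_nonneg (by split_ifs <;> norm_num) (hw.1 i)
      positivity
    · rw [Finset.sum_congr rfl (fun l _ => hSapply w l), ← Finset.mul_sum]
      rw [Finset.sum_comm]
      have : ∀ i ∈ Finset.univ, ∑ l : Fin n, ∑ j : Fin k, (if l = f i j then (1:ℝ) else 0) * w i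
          = (k:ℝ) * w i := by
        intro i _
        rw [Finset.sum_comm]
        have : ∀ j ∈ Finset.univ, ∑ l : Fin n, (if l = f i j then (1:ℝ) else 0) * w i = w i := by
          intro j _
          rw [Finset.sum_congr rfl (fun l _ => show (if l = f i j then (1:ℝ) else 0) * w i
            = if l = f i j then w i else 0 by split_ifs <;> ring)]
          simp [Finset.sum_ite_eq']
        rw [Finset.sum_congr rfl this]
        simp [Finset.sum_const, Finset.card_univ, mul_comm]
      rw [Finset.sum_congr rfl this, ← Finset.mul_sum, hw.2]
      field_simp
  obtain ⟨w, hwmem, hfix⟩ := exists_stationary hn S hSsimplex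
  -- the stationarity identity, coordinatewise
  have hB : ∀ l : Fin n,
      ∑ i : Fin n, ∑ j : Fin k, (if l = f i j then w i else 0) = (k:ℝ) * w l := by
    intro l
    have h := congrFun hfix l
    rw [hSapply] at h
    have h2 : ∑ i : Fin n, ∑ j : Fin k, (if l = f i j then (1:ℝ) else 0) * w i
        = ∑ i : Fin n, ∑ j : Fin k, (if l = f i j then w i else 0) :=
      Finset.sum_congr rfl fun i _ => Finset.sum_congr rfl fun j _ => by split_ifs <;> ring
    rw [h2] at h
    field_simp at h
    linarith [h]
  -- key: pairing any function with the stationary weights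
  have hKEY : ∀ c : Fin n → ℝ,
      ∑ i : Fin n, (∑ j : Fin k, c (f i j)) * w i = (k:ℝ) * ∑ l : Fin n, c l * w l := by
    intro c
    have h1 : ∀ i : Fin n, (∑ j : Fin k, c (f i j)) * w i
        = ∑ j : Fin k, ∑ l : Fin n, (if l = f i j then c l * w i else 0) := by
      intro i
      rw [Finset.sum_mul]
      refine Finset.sum_congr rfl fun j _ => ?_
      rw [Finset.sum_ite_eq' Finset.univ (f i j) (fun l => c l * w i)]
      simp
    rw [Finset.sum_congr rfl (fun i _ => h1 i)]
    have h2 : ∑ i : Fin n, ∑ j : Fin k, ∑ l : Fin n, (if l = f i j then c l * w i else 0)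
        = ∑ l : Fin n, ∑ i : Fin n, ∑ j : Fin k, (if l = f i j then c l * w i else 0) := by
      rw [Finset.sum_congr rfl (fun i (_ : i ∈ Finset.univ) =>
        (Finset.sum_comm (s := (Finset.univ : Finset (Fin k))) (t := (Finset.univ : Finset (Fin n)))
          (f := fun j l => if l = f i j then c l * w i else 0)))]
      exact Finset.sum_comm
    rw [h2]
    rw [Finset.mul_sum]
    refine Finset.sum_congr rfl fun l _ => ?_
    have h3 : ∀ i j, (if l = f i j then c l * w i else 0) = c l * (if l = f i j then w i else 0) := by
      intro i j; split_ifs <;> ring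
    calc ∑ i : Fin n, ∑ j : Fin k, (if l = f i j then c l * w i else 0)
        = c l * ∑ i : Fin n, ∑ j : Fin k, (if l = f i j then w i else 0) := by
          rw [Finset.mul_sum]
          exact Finset.sum_congr rfl fun i _ => by
            rw [Finset.mul_sum]; exact Finset.sum_congr rfl fun j _ => h3 i j
      _ = c l * ((k:ℝ) * w l) := by rw [hB l]
      _ = (k:ℝ) * (c l * w l) := by ring
  refine ⟨fun i t => if t = f i then w i else 0, ?_, ?_, ?_, ?_, ?_⟩
  · intro i t; simp only []; split_ifs; exacts [hwmem.1 i, le_refl 0]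
  · rw [Finset.sum_congr rfl (fun i (_ : i ∈ Finset.univ) =>
      Finset.sum_ite_eq' Finset.univ (f i) (fun _ => w i))]
    simpa using hwmem.2
  · -- balance condition
    funext l
    simp only [Finset.sum_apply, Pi.smul_apply, Pi.sub_apply, Pi.single_apply, smul_eq_mul,
      Pi.zero_apply]
    have hc1 : ∀ i : Fin n, ∑ t : Fin k → Fin n,
        (if t = f i then w i else 0) *
          ((k:ℝ) * (if l = i then 1 else 0) - ∑ j, (if l = t j then (1:ℝ) else 0))
        = w i * ((k:ℝ) * (if l = i then 1 else 0) - ∑ j, (if l = f i j then (1:ℝ) else 0)) := by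
      intro i
      rw [Finset.sum_congr rfl (fun t (_ : t ∈ Finset.univ) => show
        (if t = f i then w i else 0) *
          ((k:ℝ) * (if l = i then 1 else 0) - ∑ j, (if l = t j then (1:ℝ) else 0))
        = if t = f i then w i *
            ((k:ℝ) * (if l = i then 1 else 0) - ∑ j, (if l = t j then (1:ℝ) else 0)) else 0
        from by split_ifs <;> ring)]
      rw [Finset.sum_ite_eq' Finset.univ (f i)]
      simp
    rw [Finset.sum_congr rfl (fun i _ => hc1 i)]
    have hc2 : ∀ i : Fin n,
        w i * ((k:ℝ) * (if l = i then 1 else 0) - ∑ j, (if l = f i j then (1:ℝ) else 0))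
        = (if l = i then (k:ℝ) * w i else 0) - ∑ j, (if l = f i j then w i else 0) := by
      intro i
      rw [mul_sub, Finset.mul_sum]
      congr 1
      · split_ifs <;> ring
      · exact Finset.sum_congr rfl fun j _ => by split_ifs <;> ring
    rw [Finset.sum_congr rfl (fun i _ => hc2 i), Finset.sum_sub_distrib,
      Finset.sum_ite_eq Finset.univ l (fun i => (k:ℝ) * w i), hB l]
    simp
  · -- the value of the linear functional
    have hc3 : ∀ i : Fin n, ∑ t : Fin k → Fin n,
        A i t * (if t = f i then w i else 0) = A i (f i) * w i := by
      intro i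
      rw [Finset.sum_congr rfl (fun t (_ : t ∈ Finset.univ) => show
        A i t * (if t = f i then w i else 0) = if t = f i then A i t * w i else 0
        from by split_ifs <;> ring)]
      rw [Finset.sum_ite_eq' Finset.univ (f i) (fun t => A i t * w i)]
      simp
    rw [Finset.sum_congr rfl (fun i _ => hc3 i)]
    have hc4 : ∀ i : Fin n, A i (f i) * w i
        = lam * w i + (k:ℝ) * (x i * w i) - (∑ j, x (f i j)) * w i := by
      intro i
      have h := hf i
      have : A i (f i) = lam + (k:ℝ) * x i - ∑ j, x (f i j) := by linarith
      rw [this]; ring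
    rw [Finset.sum_congr rfl (fun i _ => hc4 i), Finset.sum_sub_distrib,
      Finset.sum_add_distrib, ← Finset.mul_sum, ← Finset.mul_sum, hwmem.2, hKEY x]
    ring
  · -- minimality
    intro y' hy0 hy1 hybal
    have hz := balance_dot x y' hybal
    have hsum : ∑ i : Fin n, ∑ t : Fin k → Fin n,
        (lam + (k:ℝ) * x i - ∑ j, x (t j)) * y' i t = lam := by
      rw [Finset.sum_congr rfl (fun i (_ : i ∈ Finset.univ) =>
        Finset.sum_congr rfl (fun t (_ : t ∈ Finset.univ) => show
          (lam + (k:ℝ) * x i - ∑ j, x (t j)) * y' i t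
          = lam * y' i t + y' i t * ((k:ℝ) * x i - ∑ j, x (t j)) from by ring))]
      rw [Finset.sum_congr rfl (fun i (_ : i ∈ Finset.univ) => Finset.sum_add_distrib),
        Finset.sum_add_distrib, hz,
        Finset.sum_congr rfl (fun i (_ : i ∈ Finset.univ) =>
          (Finset.mul_sum Finset.univ (fun t => y' i t) lam).symm),
        ← Finset.mul_sum, hy1]
      ring
    rw [← hsum]
    refine Finset.sum_le_sum fun i _ => Finset.sum_le_sum fun t _ => ?_
    have h := hub i t
    exact mul_le_mul_of_nonneg_right (by linarith) (hy0 i t)
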